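/- Let W be a standard linear Brownian motion, α ∈ (2/3, 2], and for t₀ ≥ 0 and a > 0 let T_{±a}(t₀) = inf{t − t₀ : t > t₀, |W(t) − W(t₀)| = a}. Then almost surely the Hausdorff dimension of {t ∈ [0,1] : limsup_{a→0⁺} T_{±a}(t)/a^α > 1} is at most 3/2 − 1/α. -/

import Mathlib

open MeasureTheory

/-- `W` is a standard linear Brownian motion under `P`: it starts at `0`, has almost surely
continuous paths, has independent increments, and its increments are centered Gaussian with
variance equal to the time increment. -/
def IsStandardBM {Ω : Type*} [MeasurableSpace Ω] (P : Measure Ω) (W : ℝ → Ω → ℝ) : Prop :=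
  (∀ ω, W 0 ω = 0) ∧
  (∀ᵐ ω ∂P, Continuous fun t => W t ω) ∧
  (∀ t, Measurable (W t)) ∧
  (∀ s t : ℝ, 0 ≤ s → s ≤ t →
    Measure.map (fun ω => W t ω - W s ω) P =
      ProbabilityTheory.gaussianReal 0 (Real.toNNReal (t - s))) ∧
  (∀ (n : ℕ) (τ : Fin (n + 1) → ℝ), Monotone τ → (∀ i, 0 ≤ τ i) →
    ProbabilityTheory.iIndepFun (m := fun _ : Fin n => (inferInstance : MeasurableSpace ℝ))
      (fun i ω => W (τ i.succ) ω - W (τ i.castSucc) ω) P)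

/-- The exit time `T_{±a}(t₀)` of the band of half-width `a` around `W(t₀)`, after time `t₀`. -/
noncomputable def exitTime {Ω : Type*} (W : ℝ → Ω → ℝ) (ω : Ω) (t₀ a : ℝ) : ℝ :=
  sInf { s : ℝ | 0 < s ∧ |W (t₀ + s) ω - W t₀ ω| = a }

namespace Stmt15Aux

open Filter Set ProbabilityTheory NNReal


lemma gaussPDFReal_le (v : ℝ≥0) (x : ℝ) :
    gaussianPDFReal 0 v x ≤ (Real.sqrt v)⁻¹ := by
  unfold gaussianPDFReal
  have h1 : Real.exp (-(x - 0) ^ 2 / (2 * v)) ≤ 1 := by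
    rw [Real.exp_le_one_iff]
    have : (0:ℝ) ≤ (x - 0)^2 := sq_nonneg _
    have h2 : (0:ℝ) ≤ 2 * (v:ℝ) := by positivity
    exact div_nonpos_of_nonpos_of_nonneg (by linarith) h2
  have h3 : (Real.sqrt (2 * Real.pi * v))⁻¹ ≤ (Real.sqrt v)⁻¹ := by
    rcases (NNReal.coe_nonneg v).eq_or_lt with h | h
    · rw [← h]; simp
    · apply inv_anti₀ (Real.sqrt_pos.mpr h)
      apply Real.sqrt_le_sqrt
      nlinarith [Real.pi_gt_three]
  calc (Real.sqrt (2 * Real.pi * v))⁻¹ * Real.exp (-(x - 0) ^ 2 / (2 * v))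
      ≤ (Real.sqrt (2 * Real.pi * v))⁻¹ * 1 := by
        apply mul_le_mul_of_nonneg_left h1 (by positivity)
    _ ≤ (Real.sqrt v)⁻¹ := by rw [mul_one]; exact h3

lemma gauss_band_bound {v : ℝ≥0} (hv : v ≠ 0) {c : ℝ} (hc : 0 ≤ c) :
    gaussianReal 0 v (Set.Icc (-c) c) ≤ ENNReal.ofReal (2 * c / Real.sqrt v) := by
  rw [gaussianReal_of_var_ne_zero 0 hv, withDensity_apply _ measurableSet_Icc]
  have hsp : (0:ℝ) < Real.sqrt v := Real.sqrt_pos.mpr (by positivity)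
  have hbound : ∀ x ∈ Set.Icc (-c) c,
      gaussianPDF 0 v x ≤ ENNReal.ofReal ((Real.sqrt v)⁻¹) :=
    fun x _ => ENNReal.ofReal_le_ofReal (gaussPDFReal_le v x)
  calc ∫⁻ x in Set.Icc (-c) c, gaussianPDF 0 v x ∂volume
      ≤ ∫⁻ _ in Set.Icc (-c) c, ENNReal.ofReal ((Real.sqrt v)⁻¹) ∂volume :=
        setLIntegral_mono measurable_const hbound
    _ = ENNReal.ofReal ((Real.sqrt v)⁻¹) * volume (Set.Icc (-c) c) := setLIntegral_const _ _
    _ ≤ ENNReal.ofReal (2 * c / Real.sqrt v) := by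
        rw [Real.volume_Icc, ← ENNReal.ofReal_mul (by positivity)]
        refine ENNReal.ofReal_le_ofReal (le_of_eq ?_)
        field_simp
        ring


lemma exitTime_nonneg {Ω : Type*} (W : ℝ → Ω → ℝ) (ω : Ω) (t₀ a : ℝ) :
    0 ≤ exitTime W ω t₀ a :=
  Real.sInf_nonneg fun x hx => hx.1.le

lemma band_of_exit {Ω : Type*} (W : ℝ → Ω → ℝ) (ω : Ω)
    (hcont : Continuous fun u => W u ω) {t a h : ℝ} (ha : 0 < a)
    (hT : h < exitTime W ω t a) : ∀ s ∈ Set.Icc 0 h, |W (t+s) ω - W t ω| ≤ a := by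
  by_contra hcon
  push_neg at hcon
  obtain ⟨s₀, hs₀, hgt⟩ := hcon
  set F : ℝ → ℝ := fun s => |W (t+s) ω - W t ω| with hF
  have hFc : Continuous F := ((hcont.comp (continuous_const.add continuous_id)).sub
    continuous_const).abs
  have hF0 : F 0 = 0 := by simp [hF]
  have hIVT := intermediate_value_Icc hs₀.1 hFc.continuousOn
  have hamem : a ∈ Set.Icc (F 0) (F s₀) := ⟨by rw [hF0]; exact ha.le, hgt.le⟩
  obtain ⟨s₁, hs₁mem, hFs₁⟩ := hIVT hamem
  have hs₁pos : 0 < s₁ := by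
    rcases hs₁mem.1.eq_or_lt with h | h
    · exfalso; rw [← h, hF0] at hFs₁; exact ha.ne hFs₁
    · exact h
  have hle : exitTime W ω t a ≤ s₁ :=
    csInf_le ⟨0, fun x hx => hx.1.le⟩ ⟨hs₁pos, hFs₁⟩
  linarith [hs₁mem.2, hs₀.2]

lemma freq_of_limsup {Ω : Type*} (W : ℝ → Ω → ℝ) (ω : Ω) (t α : ℝ) (hα : 0 < α)
    (hlim : 1 < Filter.limsup (fun a : ℝ => exitTime W ω t a / a ^ α)
        (nhdsWithin 0 (Set.Ioi 0))) :
    ∃ᶠ a in nhdsWithin 0 (Set.Ioi 0), 0 < a ∧ a ^ α < exitTime W ω t a := by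
  have hev : ∀ᶠ a in nhdsWithin 0 (Set.Ioi 0),
      (0:ℝ) ≤ exitTime W ω t a / a ^ α := by
    filter_upwards [eventually_mem_nhdsWithin] with a (ha : a ∈ Set.Ioi 0)
    exact div_nonneg (exitTime_nonneg W ω t a) (Real.rpow_pos_of_pos ha α).le
  have hcb : Filter.IsCoboundedUnder (· ≤ ·) (nhdsWithin 0 (Set.Ioi 0))
      (fun a : ℝ => exitTime W ω t a / a ^ α) :=
    Filter.isCoboundedUnder_le_of_eventually_le _ hev
  have hfreq := Filter.frequently_lt_of_lt_limsup hcb hlim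
  have := hfreq.and_eventually eventually_mem_nhdsWithin
  refine this.mono ?_
  rintro a ⟨hgt, (ha : a ∈ Set.Ioi 0)⟩
  have hpos : (0:ℝ) < a ^ α := Real.rpow_pos_of_pos ha α
  exact ⟨ha, (one_lt_div hpos).mp hgt⟩


noncomputable def epsn (n : ℕ) : ℝ := (2:ℝ)⁻¹ ^ n
noncomputable def deltaf (α : ℝ) (n : ℕ) : ℝ := ((2:ℝ)⁻¹ ^ (n+1)) ^ α / 2
noncomputable def Jf (α : ℝ) (n : ℕ) : ℕ := ⌈1 / deltaf α n⌉₊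
noncomputable def kf (α : ℝ) (n : ℕ) : ℕ := ⌊deltaf α n / (32 * epsn n)^2⌋₊

lemma epsn_pos (n : ℕ) : 0 < epsn n := by unfold epsn; positivity

lemma base_pos (n : ℕ) : (0:ℝ) < (2:ℝ)⁻¹ ^ (n+1) := by positivity

lemma deltaf_pos (α : ℝ) (n : ℕ) : 0 < deltaf α n := by
  unfold deltaf
  have := Real.rpow_pos_of_pos (base_pos n) α
  positivity

lemma pow_inv_eq_rpow (n : ℕ) : (2:ℝ)⁻¹ ^ n = (2:ℝ) ^ (-(n:ℝ)) := by
  rw [inv_pow, ← Real.rpow_natCast 2 n, ← Real.rpow_neg (by norm_num)]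

lemma xval (α : ℝ) (n : ℕ) :
    deltaf α n / (32 * epsn n)^2 = ((2:ℝ) ^ ((2:ℝ)-α)) ^ n * (2:ℝ) ^ (-α - 11) := by
  have h2 : (0:ℝ) ≤ 2 := by norm_num
  have a1 : deltaf α n = (2:ℝ) ^ (-((n:ℝ)+1)*α) / 2 := by
    unfold deltaf
    rw [pow_inv_eq_rpow (n+1), ← Real.rpow_mul h2]
    push_cast
    ring_nf
  have a2 : (32 * epsn n)^2 = (2:ℝ) ^ ((10:ℝ) - 2*n) := by
    unfold epsn
    rw [pow_inv_eq_rpow n, mul_pow, ← Real.rpow_natCast ((2:ℝ) ^ (-(n:ℝ))) 2,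
      ← Real.rpow_mul h2, Real.rpow_sub (by norm_num)]
    norm_num
    rw [show -((n:ℝ)*2) = -(2*(n:ℝ)) by ring, Real.rpow_neg h2]
    field_simp
  have hmul : (2:ℝ)^((11:ℝ)-2*n) = 2 * (2:ℝ)^((10:ℝ)-2*n) := by
    rw [show (11:ℝ)-2*n = 1 + (10-2*(n:ℝ)) by ring, Real.rpow_add (by norm_num), Real.rpow_one]
  rw [a1, a2, ← Real.rpow_natCast ((2:ℝ) ^ ((2:ℝ)-α)) n, ← Real.rpow_mul h2,
    ← Real.rpow_add (by norm_num), div_div, ← hmul, ← Real.rpow_sub (by norm_num)]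
  congr 1
  ring

lemma eventual_bound (α : ℝ) (hα0 : 0 < α) (hα2 : α < 2) :
    ∀ᶠ n in Filter.atTop, 1 ≤ kf α n ∧
      ((Jf α n + 1 : ℝ) * (2:ℝ)⁻¹ ^ (kf α n) ≤ (2:ℝ)⁻¹ ^ n) ∧
      (32 * epsn n)^2 ≤ deltaf α n / (kf α n) := by
  set r : ℝ := (2:ℝ) ^ ((2:ℝ)-α) with hr
  have hrpos : 0 < r := Real.rpow_pos_of_pos (by norm_num) _
  have hr1 : 1 < r :=
    (Real.one_lt_rpow_iff_of_pos (by norm_num)).mpr (Or.inl ⟨one_lt_two, by linarith⟩)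
  set s : ℝ := r⁻¹ with hs
  have hs0 : 0 < s := by positivity
  have hs1 : s < 1 := by
    rw [hs]; exact inv_lt_one_of_one_lt₀ hr1
  set C : ℝ := (2:ℝ) ^ (-α - 11) with hC
  have hCpos : 0 < C := Real.rpow_pos_of_pos (by norm_num) _
  have t1 : Filter.Tendsto (fun n : ℕ => (n:ℝ)^1 * s^n) Filter.atTop (nhds 0) :=
    (summable_pow_mul_geometric_of_norm_lt_one (R := ℝ) 1
      (by rw [Real.norm_eq_abs, abs_of_pos hs0]; exact hs1)).tendsto_atTop_zero
  have t2 : Filter.Tendsto (fun n : ℕ => s^n) Filter.atTop (nhds 0) :=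
    tendsto_pow_atTop_nhds_zero_of_lt_one hs0.le hs1
  have t3 : Filter.Tendsto (fun n : ℕ => (3*(n:ℝ)+5) * s^n) Filter.atTop (nhds 0) := by
    have := ((t1.const_mul 3).add (t2.const_mul 5))
    simp only [mul_zero, add_zero] at this
    convert this using 2 with n
    ring
  have key : ∀ᶠ n : ℕ in Filter.atTop, (3*(n:ℝ)+5) * s^n < C :=
    t3.eventually_lt_const hCpos
  filter_upwards [key] with n hn
  have hsr : s^n * r^n = 1 := by
    rw [← mul_pow, hs, inv_mul_cancel₀ (ne_of_gt hrpos), one_pow]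
  have hx : (3*(n:ℝ)+5) ≤ deltaf α n / (32 * epsn n)^2 := by
    rw [xval α n, ← hr]
    calc (3*(n:ℝ)+5) = ((3*(n:ℝ)+5) * s^n) * r^n := by rw [mul_assoc, hsr, mul_one]
      _ ≤ C * r^n := by
          apply mul_le_mul_of_nonneg_right hn.le (by positivity)
      _ = r^n * C := by ring
  set x : ℝ := deltaf α n / (32 * epsn n)^2 with hxdef
  have hxpos : 0 < x := by
    have := deltaf_pos α n; have := epsn_pos n
    positivity
  have hk1 : 1 ≤ kf α n := by
    apply Nat.le_floor
    push_cast
    linarith [Nat.cast_nonneg (α := ℝ) n]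
  have hk34 : 3*n+4 ≤ kf α n := by
    apply Nat.le_floor
    push_cast
    linarith
  have hkpos : (0:ℝ) < (kf α n : ℝ) := by exact_mod_cast hk1
  refine ⟨hk1, ?_, ?_⟩
  · -- main inequality
    have hδ := deltaf_pos α n
    have hb0 : (0:ℝ) < (2:ℝ)⁻¹ ^ (n+1) := base_pos n
    have hb1 : (2:ℝ)⁻¹ ^ (n+1) ≤ 1 := by
      apply pow_le_one₀ <;> norm_num
    have hrp : ((2:ℝ)⁻¹ ^ (n+1)) ^ (2:ℝ) ≤ ((2:ℝ)⁻¹ ^ (n+1)) ^ α :=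
      Real.rpow_le_rpow_of_exponent_ge hb0 hb1 hα2.le
    have hsq : ((2:ℝ)⁻¹ ^ (n+1)) ^ (2:ℝ) = (4:ℝ)⁻¹ ^ (n+1) := by
      rw [show (2:ℝ) = ((2:ℕ):ℝ) by norm_num, Real.rpow_natCast, ← pow_mul, mul_comm (n+1) 2,
        pow_mul]
      norm_num
    have hJle : (Jf α n : ℝ) < 1 / deltaf α n + 1 := by
      apply Nat.ceil_lt_add_one
      positivity
    have hdelta_ge : (4:ℝ)⁻¹ ^ (n+1) / 2 ≤ deltaf α n := by
      unfold deltaf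
      rw [← hsq]
      linarith
    have h4pos : (0:ℝ) < (4:ℝ)⁻¹ ^ (n+1) := by positivity
    have hinv : 1 / deltaf α n ≤ 2 * (4:ℝ) ^ (n+1) := by
      rw [div_le_iff₀ hδ]
      have h1 : (4:ℝ) ^ (n+1) * (4:ℝ)⁻¹ ^ (n+1) = 1 := by
        rw [← mul_pow]
        norm_num
      nlinarith
    have hJ : (Jf α n + 1 : ℝ) ≤ (4:ℝ) ^ (n+2) := by
      have h41 : (1:ℝ) ≤ (4:ℝ)^(n+1) := one_le_pow₀ (by norm_num)
      have : (4:ℝ)^(n+2) = 4 * (4:ℝ)^(n+1) := by ring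
      nlinarith
    have hpow : ((2:ℝ)⁻¹) ^ (kf α n) ≤ ((2:ℝ)⁻¹) ^ (3*n+4) :=
      pow_le_pow_of_le_one (by norm_num) (by norm_num) hk34
    have he : (4:ℝ)^(n+2) * ((2:ℝ)⁻¹)^(3*n+4) = ((2:ℝ)⁻¹)^n := by
      rw [show (4:ℝ) = 2^2 by norm_num, ← pow_mul, inv_pow, inv_pow]
      field_simp
      rw [← pow_add]
      congr 1
      omega
    calc (Jf α n + 1 : ℝ) * (2:ℝ)⁻¹ ^ (kf α n)
        ≤ (4:ℝ)^(n+2) * ((2:ℝ)⁻¹)^(3*n+4) := by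
          apply mul_le_mul hJ hpow (by positivity) (by positivity)
      _ = ((2:ℝ)⁻¹)^n := he
  · -- variance condition
    have hfle : (kf α n : ℝ) ≤ x := Nat.floor_le hxpos.le
    have hδ := deltaf_pos α n
    have h1 : deltaf α n / x ≤ deltaf α n / kf α n :=
      div_le_div_of_nonneg_left hδ.le hkpos hfle
    have hε := epsn_pos n
    have h2 : deltaf α n / x = (32 * epsn n)^2 := by
      rw [hxdef]
      field_simp
    linarith


lemma two_deltaf (α : ℝ) (n : ℕ) : 2 * deltaf α n = ((2:ℝ)⁻¹ ^ (n+1)) ^ α := by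
  unfold deltaf; ring

lemma smallball {Ω : Type*} [MeasurableSpace Ω] (P : Measure Ω) [IsProbabilityMeasure P]
    (W : ℝ → Ω → ℝ) (hW : IsStandardBM P W) {g L ε : ℝ} (hg : 0 ≤ g) (hL : 0 < L)
    (hε : 0 < ε) (k : ℕ) (hk : 1 ≤ k) (hvar : (32 * ε)^2 ≤ L / k) :
    P {ω | ∀ s ∈ Set.Icc 0 L, |W (g+s) ω - W g ω| ≤ 2*ε} ≤ ENNReal.ofReal ((2:ℝ)⁻¹ ^ k) := by
  have hk0 : (0:ℝ) < (k:ℝ) := by exact_mod_cast hk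
  have hLk : (0:ℝ) < L / k := by positivity
  set τ : Fin (k+1) → ℝ := fun j => g + (j:ℕ) * (L/k) with hτ
  have hτmono : Monotone τ := by
    intro i j hij
    have : ((i:ℕ):ℝ) ≤ ((j:ℕ):ℝ) := by exact_mod_cast (Fin.le_iff_val_le_val.mp hij)
    simp only [hτ]
    nlinarith
  have hτnn : ∀ i, 0 ≤ τ i := fun i => by
    simp only [hτ]; positivity
  have hind := hW.2.2.2.2 k τ hτmono hτnn
  set Δ : Fin k → Ω → ℝ := fun i ω => W (τ i.succ) ω - W (τ i.castSucc) ω with hΔ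
  -- event inclusion
  have hsub : {ω | ∀ s ∈ Set.Icc 0 L, |W (g+s) ω - W g ω| ≤ 2*ε} ⊆
      ⋂ i ∈ (Finset.univ : Finset (Fin k)), Δ i ⁻¹' Set.Icc (-(4*ε)) (4*ε) := by
    intro ω hω
    simp only [Set.mem_iInter, Set.mem_preimage, Set.mem_Icc]
    intro i _
    have hmem : ∀ (x : ℝ), 0 ≤ x → x ≤ (k:ℝ) → |W (g + x * (L/k)) ω - W g ω| ≤ 2*ε := by
      intro x hx0 hxk
      apply hω
      constructor
      · positivity
      · calc x * (L/k) ≤ (k:ℝ) * (L/k) := by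
              apply mul_le_mul_of_nonneg_right hxk hLk.le
          _ = L := by field_simp
    have h1 := hmem ((i:ℕ)+1) (by positivity) (by exact_mod_cast i.2)
    have h2 := hmem (i:ℕ) (by positivity) (by exact_mod_cast (le_of_lt i.2))
    have he : Δ i ω = (W (g + ((i:ℕ)+1) * (L/k)) ω - W g ω) - (W (g + (i:ℕ) * (L/k)) ω - W g ω) := by
      simp only [hΔ, hτ, Fin.val_succ, Fin.coe_castSucc]
      push_cast
      ring_nf
    rw [← abs_le]
    rw [he]
    calc |_ - _| ≤ |W (g + ((i:ℕ)+1) * (L/k)) ω - W g ω| + |W (g + (i:ℕ) * (L/k)) ω - W g ω| :=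
          abs_sub _ _
      _ ≤ 2*ε + 2*ε := add_le_add h1 h2
      _ = 4*ε := by ring
  refine (measure_mono hsub).trans ?_
  have hmeas : ∀ i : Fin k, i ∈ (Finset.univ : Finset (Fin k)) →
      MeasurableSet (Set.Icc (-(4*ε)) (4*ε)) := fun _ _ => measurableSet_Icc
  rw [hind.measure_inter_preimage_eq_mul Finset.univ
    (sets := fun _ => Set.Icc (-(4*ε)) (4*ε)) hmeas]
  have hone : ∀ i : Fin k, P (Δ i ⁻¹' Set.Icc (-(4*ε)) (4*ε)) ≤ ENNReal.ofReal (2⁻¹ : ℝ) := by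
    intro i
    have hmΔ : Measurable (Δ i) := (hW.2.2.1 _).sub (hW.2.2.1 _)
    have hdiff : τ i.succ - τ i.castSucc = L / k := by
      simp only [hτ, Fin.val_succ, Fin.coe_castSucc]; push_cast; ring
    have hmap := hW.2.2.2.1 (τ i.castSucc) (τ i.succ) (hτnn _)
      (hτmono (Fin.castSucc_le_succ i))
    have : P (Δ i ⁻¹' Set.Icc (-(4*ε)) (4*ε))
        = gaussianReal 0 (Real.toNNReal (L/k)) (Set.Icc (-(4*ε)) (4*ε)) := by
      rw [← hdiff, ← hmap, Measure.map_apply hmΔ measurableSet_Icc]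
    rw [this]
    have hvne : Real.toNNReal (L/k) ≠ 0 := by
      simp [Real.toNNReal_eq_zero, not_le, hLk]
    refine (gauss_band_bound hvne (by positivity)).trans ?_
    apply ENNReal.ofReal_le_ofReal
    have hcoe : ((Real.toNNReal (L/k) : ℝ≥0) : ℝ) = L / k := Real.coe_toNNReal _ hLk.le
    rw [hcoe]
    have hsq : 32 * ε ≤ Real.sqrt (L/k) := by
      have h := Real.sqrt_le_sqrt hvar
      rwa [Real.sqrt_sq (by positivity)] at h
    have hs0 : (0:ℝ) < Real.sqrt (L/k) := lt_of_lt_of_le (by positivity) hsq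
    rw [div_le_iff₀ hs0]
    nlinarith
  calc ∏ i ∈ (Finset.univ : Finset (Fin k)), P (Δ i ⁻¹' Set.Icc (-(4*ε)) (4*ε))
      ≤ ∏ _i ∈ (Finset.univ : Finset (Fin k)), ENNReal.ofReal (2⁻¹ : ℝ) :=
        Finset.prod_le_prod' fun i _ => hone i
    _ = ENNReal.ofReal (2⁻¹ : ℝ) ^ k := by rw [Finset.prod_const, Finset.card_univ, Fintype.card_fin]
    _ = ENNReal.ofReal ((2:ℝ)⁻¹ ^ k) := (ENNReal.ofReal_pow (by norm_num) _).symm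


end Stmt15Aux

/-- Almost surely, the set of `t ∈ [0,1]` with `limsup_{a→0⁺} T_{±a}(t)/a^α > 1` has Hausdorff
dimension at most `3/2 - 1/α`, for `2/3 < α ≤ 2`. -/
theorem stmt15 {Ω : Type*} [MeasurableSpace Ω] (P : Measure Ω) [IsProbabilityMeasure P]
    (W : ℝ → Ω → ℝ) (hW : IsStandardBM P W) (α : ℝ) (hα1 : 2 / 3 < α) (hα2 : α ≤ 2) :
    ∀ᵐ ω ∂P,
      dimH { t : ℝ | t ∈ Set.Icc (0 : ℝ) 1 ∧
          1 < Filter.limsup (fun a : ℝ => exitTime W ω t a / a ^ α)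
              (nhdsWithin 0 (Set.Ioi 0)) } ≤
        ENNReal.ofReal (3 / 2 - 1 / α) := by
  classical
  rcases eq_or_lt_of_le hα2 with heq | hlt2
  · -- α = 2 : trivial bound, dimension of a subset of ℝ is at most 1
    subst heq
    refine ae_of_all _ fun ω => ?_
    have h1 : dimH { t : ℝ | t ∈ Set.Icc (0 : ℝ) 1 ∧
        1 < Filter.limsup (fun a : ℝ => exitTime W ω t a / a ^ (2:ℝ))
            (nhdsWithin 0 (Set.Ioi 0)) } ≤ dimH (Set.univ : Set ℝ) :=
      dimH_mono (Set.subset_univ _)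
    rw [Real.dimH_univ] at h1
    have h2 : ENNReal.ofReal (3 / 2 - 1 / (2:ℝ)) = 1 := by norm_num
    rw [h2]
    exact h1
  · -- α < 2 : the slow set is almost surely empty
    have hα0 : (0:ℝ) < α := lt_trans (by norm_num) hα1
    set B : ℕ → ℕ → Set Ω := fun n j =>
      {ω | ∀ s ∈ Set.Icc 0 (Stmt15Aux.deltaf α n),
        |W ((j:ℝ) * Stmt15Aux.deltaf α n + s) ω - W ((j:ℝ) * Stmt15Aux.deltaf α n) ω|
          ≤ 2 * Stmt15Aux.epsn n} with hB
    set A : ℕ → Set Ω := fun n => ⋃ j ∈ Finset.range (Stmt15Aux.Jf α n + 1), B n j with hA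
    set bad : Set Ω := ⋂ N : ℕ, ⋃ n : ℕ, ⋃ (_ : N ≤ n), A n with hbad
    obtain ⟨N₀, hN₀⟩ := Filter.eventually_atTop.mp (Stmt15Aux.eventual_bound α hα0 hlt2)
    have hAn : ∀ n, N₀ ≤ n → P (A n) ≤ ENNReal.ofReal ((2:ℝ)⁻¹ ^ n) := by
      intro n hn
      obtain ⟨hk1, hineq, hvar⟩ := hN₀ n hn
      have hBle : ∀ j : ℕ, P (B n j) ≤ ENNReal.ofReal ((2:ℝ)⁻¹ ^ (Stmt15Aux.kf α n)) := by
        intro j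
        have hδ := Stmt15Aux.deltaf_pos α n
        exact Stmt15Aux.smallball P W hW (by positivity) hδ
          (Stmt15Aux.epsn_pos n) _ hk1 hvar
      calc P (A n) ≤ ∑ j ∈ Finset.range (Stmt15Aux.Jf α n + 1), P (B n j) :=
            measure_biUnion_finset_le _ _
        _ ≤ (Finset.range (Stmt15Aux.Jf α n + 1)).card •
              ENNReal.ofReal ((2:ℝ)⁻¹ ^ (Stmt15Aux.kf α n)) :=
            Finset.sum_le_card_nsmul _ _ _ fun j _ => hBle j
        _ = ENNReal.ofReal (((Stmt15Aux.Jf α n + 1 : ℕ) : ℝ)) *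
              ENNReal.ofReal ((2:ℝ)⁻¹ ^ (Stmt15Aux.kf α n)) := by
            rw [Finset.card_range, nsmul_eq_mul, ENNReal.ofReal_natCast]
        _ = ENNReal.ofReal (((Stmt15Aux.Jf α n + 1 : ℕ) : ℝ) * (2:ℝ)⁻¹ ^ (Stmt15Aux.kf α n)) :=
            (ENNReal.ofReal_mul (by positivity)).symm
        _ ≤ ENNReal.ofReal ((2:ℝ)⁻¹ ^ n) :=
            ENNReal.ofReal_le_ofReal (by push_cast; push_cast at hineq; linarith)
    have hbad0 : P bad = 0 := by
      set q : ENNReal := ENNReal.ofReal (2:ℝ)⁻¹ with hq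
      have hq1 : q < 1 := by
        rw [hq]
        exact ENNReal.ofReal_lt_one.mpr (by norm_num)
      have hcne : (1 - q)⁻¹ ≠ ⊤ := by
        rw [Ne, ENNReal.inv_eq_top, tsub_eq_zero_iff_le]
        exact not_le.mpr hq1
      have htail : ∀ N : ℕ, P bad ≤ q ^ (N₀ + N) * (1 - q)⁻¹ := by
        intro N
        have hsub : bad ⊆ ⋃ m : ℕ, A (N₀ + N + m) := by
          intro ω hω
          have h1 := Set.mem_iInter.mp hω (N₀ + N)
          simp only [Set.mem_iUnion] at h1
          obtain ⟨n, hn, hmem⟩ := h1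
          exact Set.mem_iUnion.mpr ⟨n - (N₀+N), by rwa [show N₀+N+(n-(N₀+N)) = n by omega]⟩
        calc P bad ≤ ∑' m : ℕ, P (A (N₀ + N + m)) :=
              (measure_mono hsub).trans (measure_iUnion_le _)
          _ ≤ ∑' m : ℕ, q ^ (N₀ + N + m) := ENNReal.tsum_le_tsum fun m => by
              have h2 := hAn (N₀+N+m) (by omega)
              rwa [ENNReal.ofReal_pow (by norm_num)] at h2
          _ = q ^ (N₀+N) * ∑' m : ℕ, q ^ m := by
              simp_rw [pow_add]
              rw [ENNReal.tsum_mul_left]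
          _ = q ^ (N₀+N) * (1 - q)⁻¹ := by rw [ENNReal.tsum_geometric]
      have htendsto : Filter.Tendsto (fun N : ℕ => q ^ (N₀ + N) * (1 - q)⁻¹)
          Filter.atTop (nhds 0) := by
        have h1 : Filter.Tendsto (fun N : ℕ => q ^ N) Filter.atTop (nhds 0) :=
          ENNReal.tendsto_pow_atTop_nhds_zero_of_lt_one hq1
        have h2 : Filter.Tendsto (fun N : ℕ => q ^ (N₀ + N)) Filter.atTop (nhds 0) := by
          have := h1.comp (Filter.tendsto_add_atTop_nat N₀)
          simpa [Function.comp_def, Nat.add_comm] using this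
        have h3 := ENNReal.Tendsto.mul_const h2 (Or.inr hcne)
        simpa using h3
      have hle : P bad ≤ 0 := ge_of_tendsto' htendsto htail
      exact le_antisymm hle (zero_le)
    filter_upwards [hW.2.1, measure_eq_zero_iff_ae_notMem.mp hbad0] with ω hcont hnbad
    have hempty : { t : ℝ | t ∈ Set.Icc (0 : ℝ) 1 ∧
        1 < Filter.limsup (fun a : ℝ => exitTime W ω t a / a ^ α)
            (nhdsWithin 0 (Set.Ioi 0)) } = ∅ := by
      rw [Set.eq_empty_iff_forall_notMem]
      rintro t ⟨htIcc, hlim⟩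
      apply hnbad
      refine Set.mem_iInter.mpr fun N => ?_
      have hfreq := Stmt15Aux.freq_of_limsup W ω t α hα0 hlim
      have hIoo : Set.Ioo (0:ℝ) ((2:ℝ)⁻¹ ^ N) ∈ nhdsWithin 0 (Set.Ioi 0) :=
        Ioo_mem_nhdsGT_of_mem ⟨le_refl 0, by positivity⟩
      obtain ⟨a, ⟨ha0, haT⟩, haIoo⟩ :=
        (hfreq.and_eventually (Filter.eventually_of_mem hIoo fun x hx => hx)).exists
      have hband0 := Stmt15Aux.band_of_exit W ω hcont ha0 haT
      have hex : ∃ m : ℕ, (2:ℝ)⁻¹ ^ m < a := exists_pow_lt_of_lt_one ha0 (by norm_num)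
      have hm₀ : (2:ℝ)⁻¹ ^ (Nat.find hex) < a := Nat.find_spec hex
      have hNm₀ : N < Nat.find hex := by
        by_contra hcon
        push_neg at hcon
        have h1 : (2:ℝ)⁻¹ ^ N ≤ (2:ℝ)⁻¹ ^ (Nat.find hex) :=
          pow_le_pow_of_le_one (by norm_num) (by norm_num) hcon
        linarith [haIoo.2]
      set n := Nat.find hex - 1 with hndef
      have hm₀succ : Nat.find hex = n + 1 := by omega
      have hnN : N ≤ n := by omega
      have hub : a ≤ (2:ℝ)⁻¹ ^ n := not_lt.mp (Nat.find_min hex (by omega))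
      have hlb : (2:ℝ)⁻¹ ^ (n+1) < a := by rw [← hm₀succ]; exact hm₀
      have hδ := Stmt15Aux.deltaf_pos α n
      have h2δ : 2 * Stmt15Aux.deltaf α n ≤ a ^ α := by
        rw [Stmt15Aux.two_deltaf]
        exact Real.rpow_le_rpow (by positivity) hlb.le hα0.le
      have ht0 : 0 ≤ t := htIcc.1
      have ht1 : t ≤ 1 := htIcc.2
      set δ := Stmt15Aux.deltaf α n with hδdef
      set j := ⌈t / δ⌉₊ with hjdef
      have hjl : t ≤ (j:ℝ) * δ := by
        have h1 : t / δ ≤ (j:ℝ) := Nat.le_ceil _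
        calc t = (t/δ) * δ := by field_simp
          _ ≤ (j:ℝ) * δ := mul_le_mul_of_nonneg_right h1 hδ.le
      have hjr : (j:ℝ) * δ ≤ t + δ := by
        have h1 : (j:ℝ) < t/δ + 1 := Nat.ceil_lt_add_one (by positivity)
        have h2 : (t/δ+1)*δ = t + δ := by field_simp
        nlinarith
      have hjJ : j ∈ Finset.range (Stmt15Aux.Jf α n + 1) := by
        rw [Finset.mem_range, Nat.lt_succ_iff]
        exact Nat.ceil_le_ceil (by gcongr)
      have hmemB : ω ∈ B n j := by
        intro s hs
        obtain ⟨hs0, hsδ⟩ := hs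
        have e1 : (j:ℝ)*δ + s - t ∈ Set.Icc 0 (a^α) := ⟨by linarith, by linarith⟩
        have b1 := hband0 _ e1
        rw [show t + ((j:ℝ)*δ + s - t) = (j:ℝ)*δ + s by ring] at b1
        have e2 : (j:ℝ)*δ - t ∈ Set.Icc 0 (a^α) := ⟨by linarith, by linarith⟩
        have b2 := hband0 _ e2
        rw [show t + ((j:ℝ)*δ - t) = (j:ℝ)*δ by ring] at b2
        have habs : |W ((j:ℝ)*δ + s) ω - W ((j:ℝ)*δ) ω| ≤
            |W ((j:ℝ)*δ + s) ω - W t ω| + |W t ω - W ((j:ℝ)*δ) ω| := abs_sub_le _ _ _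
        rw [abs_sub_comm (W t ω)] at habs
        have heps : a ≤ Stmt15Aux.epsn n := hub
        calc |W ((j:ℝ)*δ + s) ω - W ((j:ℝ)*δ) ω|
            ≤ |W ((j:ℝ)*δ + s) ω - W t ω| + |W ((j:ℝ)*δ) ω - W t ω| := habs
          _ ≤ a + a := add_le_add b1 b2
          _ ≤ 2 * Stmt15Aux.epsn n := by linarith
      refine Set.mem_iUnion.mpr ⟨n, Set.mem_iUnion.mpr ⟨hnN, ?_⟩⟩
      exact Set.mem_biUnion hjJ hmemB
    rw [hempty, dimH_empty]
    exact zero_le
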